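/- For a function v : [R₁,R₂] → ℝ (continuously differentiable) with v(R₁) = v(R₂) = 0, one has for every ρ ∈ [R₁,R₂]: |v(ρ)|² ≤ (log(R₂/R₁)/4)·∫_{R₁}^{R₂} |v'(r)|² r dr. -/

import Mathlib

open Real Set intervalIntegral MeasureTheory

lemma cs_aux (g : ℝ → ℝ) (a b : ℝ) (ha : 0 < a) (hab : a ≤ b)
    (hg : ContinuousOn g (Icc a b)) :
    (∫ r in a..b, g r) ^ 2 ≤ Real.log (b / a) * ∫ r in a..b, g r ^ 2 * r := by
  rcases eq_or_lt_of_le hab with rfl | hlt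
  · simp
  have hb : 0 < b := ha.trans hlt
  have hIcc : uIcc a b = Icc a b := uIcc_of_le hab
  have hrpos : ∀ r ∈ Icc a b, 0 < r := fun r hr => ha.trans_le hr.1
  have hginv : ContinuousOn (fun r : ℝ => 1 / r) (Icc a b) :=
    ContinuousOn.div continuousOn_const continuousOn_id fun r hr => (hrpos r hr).ne'
  have hgr : ContinuousOn (fun r : ℝ => g r ^ 2 * r) (Icc a b) :=
    (hg.pow 2).mul continuousOn_id
  have hint_g : IntervalIntegrable g volume a b :=
    (hg.mono hIcc.le).intervalIntegrable
  have hint_gr : IntervalIntegrable (fun r => g r ^ 2 * r) volume a b :=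
    (hgr.mono hIcc.le).intervalIntegrable
  have hint_inv : IntervalIntegrable (fun r : ℝ => 1 / r) volume a b :=
    (hginv.mono hIcc.le).intervalIntegrable
  set A := ∫ r in a..b, g r ^ 2 * r with hA
  set B := ∫ r in a..b, g r with hB
  have hC : (∫ r in a..b, 1 / r) = Real.log (b / a) := integral_one_div_of_pos ha hb
  set C := Real.log (b / a) with hCdef
  have hCpos : 0 < C := Real.log_pos ((one_lt_div ha).mpr hlt)
  have key : ∀ t : ℝ, 0 ≤ A - 2 * t * B + t ^ 2 * C := by
    intro t
    have h0 : 0 ≤ ∫ r in a..b, (g r * Real.sqrt r - t / Real.sqrt r) ^ 2 :=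
      intervalIntegral.integral_nonneg hab fun x _ => sq_nonneg _
    have heq : (∫ r in a..b, (g r * Real.sqrt r - t / Real.sqrt r) ^ 2)
        = A - 2 * t * B + t ^ 2 * C := by
      have hcongr : (∫ r in a..b, (g r * Real.sqrt r - t / Real.sqrt r) ^ 2)
          = ∫ r in a..b, (g r ^ 2 * r - 2 * t * g r + t ^ 2 * (1 / r)) := by
        apply intervalIntegral.integral_congr
        intro x hx
        rw [hIcc] at hx
        have hx0 : 0 < x := hrpos x hx
        have hs : Real.sqrt x ≠ 0 := (Real.sqrt_pos.mpr hx0).ne'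
        have h1 : (g x * Real.sqrt x - t / Real.sqrt x) ^ 2
            = g x ^ 2 * Real.sqrt x ^ 2 - 2 * t * g x + t ^ 2 * (1 / Real.sqrt x ^ 2) := by
          have hsq : Real.sqrt x ^ 2 = x := Real.sq_sqrt hx0.le
          field_simp
          rw [hsq]
          ring
        simp only [h1, Real.sq_sqrt hx0.le]
      rw [hcongr, intervalIntegral.integral_add ((hint_gr.sub (hint_g.const_mul (2 * t))))
        (hint_inv.const_mul (t ^ 2)), intervalIntegral.integral_sub hint_gr
        (hint_g.const_mul (2 * t)), intervalIntegral.integral_const_mul,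
        intervalIntegral.integral_const_mul, hC]
    linarith [heq ▸ h0]
  have h := key (B / C)
  have hC0 : C ≠ 0 := hCpos.ne'
  have hrw : A - 2 * (B / C) * B + (B / C) ^ 2 * C = A - B ^ 2 / C := by
    field_simp
    ring
  rw [hrw] at h
  have h4 : B ^ 2 / C ≤ A := by linarith
  calc B ^ 2 = B ^ 2 / C * C := by field_simp
    _ ≤ A * C := mul_le_mul_of_nonneg_right h4 hCpos.le
    _ = C * A := mul_comm _ _

theorem pointwise_bound_1d (R₁ R₂ : ℝ) (hR₁ : 0 < R₁) (hR : R₁ < R₂)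
    (v : ℝ → ℝ) (hv : ContDiffOn ℝ 1 v (Icc R₁ R₂))
    (hv₁ : v R₁ = 0) (hv₂ : v R₂ = 0) :
    ∀ ρ ∈ Icc R₁ R₂,
      (v ρ) ^ 2 ≤ Real.log (R₂ / R₁) / 4 * ∫ r in R₁..R₂, (deriv v r) ^ 2 * r := by
  intro ρ hρ
  have hρ₀ : 0 < ρ := hR₁.trans_le hρ.1
  set g := derivWithin v (Icc R₁ R₂) with hgdef
  have hgc : ContinuousOn g (Icc R₁ R₂) :=
    hv.continuousOn_derivWithin (uniqueDiffOn_Icc hR) le_rfl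
  have hder : ∀ x ∈ Ioo R₁ R₂, HasDerivAt v (g x) x := by
    intro x hx
    have hmem : x ∈ Icc R₁ R₂ := Ioo_subset_Icc_self hx
    exact ((hv.differentiableOn one_ne_zero) x hmem).hasDerivWithinAt.hasDerivAt
      (Icc_mem_nhds hx.1 hx.2)
  have hint : ∀ a b, R₁ ≤ a → a ≤ b → b ≤ R₂ →
      IntervalIntegrable (fun r => g r ^ 2 * r) volume a b := by
    intro a b h1 h2 h3
    apply ContinuousOn.intervalIntegrable
    apply ((hgc.pow 2).mul continuousOn_id).mono
    rw [uIcc_of_le h2]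
    exact Icc_subset_Icc h1 h3
  have ftc : ∀ a b, R₁ ≤ a → a ≤ b → b ≤ R₂ → (∫ r in a..b, g r) = v b - v a := by
    intro a b h1 h2 h3
    apply intervalIntegral.integral_eq_sub_of_hasDerivAt_of_le h2
      (hv.continuousOn.mono (Icc_subset_Icc h1 h3))
      (fun x hx => hder x ⟨lt_of_le_of_lt h1 hx.1, lt_of_lt_of_le hx.2 h3⟩)
    apply ContinuousOn.intervalIntegrable
    apply hgc.mono
    rw [uIcc_of_le h2]
    exact Icc_subset_Icc h1 h3
  have hIeq : (∫ r in R₁..R₂, (deriv v r) ^ 2 * r) = ∫ r in R₁..R₂, g r ^ 2 * r := by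
    apply intervalIntegral.integral_congr_ae
    have hne : ∀ᵐ x : ℝ ∂volume, x ≠ R₂ := by
      rw [MeasureTheory.ae_iff]
      simp [Real.volume_singleton]
    filter_upwards [hne] with x hx hmem
    rw [uIoc_of_le hR.le] at hmem
    have hxo : x ∈ Ioo R₁ R₂ := ⟨hmem.1, lt_of_le_of_ne hmem.2 hx⟩
    rw [(hder x hxo).deriv]
  rw [hIeq]
  set I₁ := ∫ r in R₁..ρ, g r ^ 2 * r with hI₁def
  set I₂ := ∫ r in ρ..R₂, g r ^ 2 * r with hI₂def
  have hsplit : I₁ + I₂ = ∫ r in R₁..R₂, g r ^ 2 * r :=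
    intervalIntegral.integral_add_adjacent_intervals
      (hint R₁ ρ le_rfl hρ.1 hρ.2) (hint ρ R₂ hρ.1 hρ.2 le_rfl)
  have hI₁ : 0 ≤ I₁ :=
    intervalIntegral.integral_nonneg hρ.1
      (fun x hx => mul_nonneg (sq_nonneg _) (hR₁.le.trans hx.1))
  have hI₂ : 0 ≤ I₂ :=
    intervalIntegral.integral_nonneg hρ.2
      (fun x hx => mul_nonneg (sq_nonneg _) (hρ₀.le.trans hx.1))
  have hv_eq₁ : v ρ = ∫ r in R₁..ρ, g r := by
    rw [ftc R₁ ρ le_rfl hρ.1 hρ.2, hv₁]; ring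
  have hv_eq₂ : v ρ = -∫ r in ρ..R₂, g r := by
    rw [ftc ρ R₂ hρ.1 hρ.2 le_rfl, hv₂]; ring
  have cs₁ : (v ρ) ^ 2 ≤ Real.log (ρ / R₁) * I₁ := by
    rw [hv_eq₁]
    exact cs_aux g R₁ ρ hR₁ hρ.1 (hgc.mono (Icc_subset_Icc le_rfl hρ.2))
  have cs₂ : (v ρ) ^ 2 ≤ Real.log (R₂ / ρ) * I₂ := by
    rw [hv_eq₂, neg_sq]
    exact cs_aux g ρ R₂ hρ₀ hρ.2 (hgc.mono (Icc_subset_Icc hρ.1 le_rfl))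
  set La := Real.log (ρ / R₁) with hLadef
  set Lb := Real.log (R₂ / ρ) with hLbdef
  have hLa : 0 ≤ La := Real.log_nonneg ((one_le_div hR₁).mpr hρ.1)
  have hLb : 0 ≤ Lb := Real.log_nonneg ((one_le_div hρ₀).mpr hρ.2)
  have hLsum : La + Lb = Real.log (R₂ / R₁) := by
    rw [hLadef, hLbdef, Real.log_div hρ₀.ne' hR₁.ne',
      Real.log_div (hR₁.trans hR).ne' hρ₀.ne', Real.log_div (hR₁.trans hR).ne' hR₁.ne']
    ring
  have hLpos : 0 < La + Lb := by
    rw [hLsum]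
    exact Real.log_pos ((one_lt_div hR₁).mpr hR)
  rw [← hsplit, ← hLsum]
  have h5 : (La + Lb) * (v ρ) ^ 2 ≤ La * Lb * (I₁ + I₂) := by
    nlinarith [mul_le_mul_of_nonneg_left cs₂ hLa, mul_le_mul_of_nonneg_left cs₁ hLb]
  have h6 : La * Lb ≤ (La + Lb) ^ 2 / 4 := by nlinarith [sq_nonneg (La - Lb)]
  have h7 : (La + Lb) * (v ρ) ^ 2 ≤ (La + Lb) ^ 2 / 4 * (I₁ + I₂) := by
    nlinarith [mul_le_mul_of_nonneg_right h6 (add_nonneg hI₁ hI₂)]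
  have h8 : (La + Lb) * ((La + Lb) / 4 * (I₁ + I₂)) = (La + Lb) ^ 2 / 4 * (I₁ + I₂) := by ring
  exact le_of_mul_le_mul_left (by rw [h8]; exact h7) hLpos
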